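/- arXiv:1112.0296 — 2 statements merged into one kernel-verified Lean document; each statement's English description precedes it below -/
import Mathlib

section
/- There is no Borel probability measure F on ℝ whose Gaussian-smoothed log-density satisfies ∫ φ(y−t)·log(f(y;F)) dy = K for a constant K and all t ∈ ℝ, where f(y;F) = ∫ φ(y−s) dF(s) and F is supported on a bounded interval [−A, A]. -/
open MeasureTheory Real Set

/-- The standard Gaussian density. -/
noncomputable def φ (x : ℝ) : ℝ := (Real.sqrt (2 * π))⁻¹ * Real.exp (-x ^ 2 / 2)

lemma sqrt2pi_pos : 0 < Real.sqrt (2 * π) := Real.sqrt_pos.2 (by positivity)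

lemma φ_pos (x : ℝ) : 0 < φ x := by unfold φ; positivity

lemma continuous_φ : Continuous φ := by unfold φ; continuity

lemma φ_le_φ {x y : ℝ} (h : |y| ≤ |x|) : φ x ≤ φ y := by
  have hxy : y ^ 2 ≤ x ^ 2 := by
    rw [← sq_abs x, ← sq_abs y]; exact pow_le_pow_left₀ (abs_nonneg _) h 2
  have := Real.exp_le_exp.2 (by linarith : -x ^ 2 / 2 ≤ -y ^ 2 / 2)
  exact mul_le_mul_of_nonneg_left this (inv_nonneg.2 sqrt2pi_pos.le)

lemma φ_le (x : ℝ) : φ x ≤ (Real.sqrt (2 * π))⁻¹ := by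
  have h := φ_le_φ (x := x) (y := 0) (by simp)
  simpa [φ] using h

lemma log_φ (x : ℝ) :
    Real.log (φ x) = Real.log ((Real.sqrt (2 * π))⁻¹) - x ^ 2 / 2 := by
  unfold φ
  rw [Real.log_mul (ne_of_gt (inv_pos.2 sqrt2pi_pos)) (Real.exp_ne_zero _), Real.log_exp]
  ring

lemma integrable_φ : Integrable φ := by
  have h : Integrable (fun x : ℝ => Real.exp (-(1/2) * x ^ 2)) :=
    integrable_exp_neg_mul_sq (by norm_num)
  have h2 : Integrable (fun x : ℝ => (Real.sqrt (2 * π))⁻¹ * Real.exp (-(1/2) * x ^ 2)) :=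
    h.const_mul _
  refine h2.congr (Filter.Eventually.of_forall fun x => ?_)
  show (Real.sqrt (2 * π))⁻¹ * Real.exp (-(1/2) * x ^ 2) = φ x
  unfold φ; congr 1; ring

lemma integrable_φ_sq : Integrable (fun x : ℝ => φ x * x ^ 2) := by
  have h : Integrable (fun x : ℝ => x ^ (2:ℝ) * Real.exp (-(1/2) * x ^ 2)) :=
    integrable_rpow_mul_exp_neg_mul_sq (by norm_num) (by norm_num)
  have h2 : Integrable
      (fun x : ℝ => (Real.sqrt (2 * π))⁻¹ * (x ^ (2:ℝ) * Real.exp (-(1/2) * x ^ 2))) :=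
    h.const_mul _
  refine h2.congr (Filter.Eventually.of_forall fun x => ?_)
  show (Real.sqrt (2 * π))⁻¹ * (x ^ (2:ℝ) * Real.exp (-(1/2) * x ^ 2)) = φ x * x ^ 2
  rw [rpow_two, show -(1/2 : ℝ) * x ^ 2 = -x ^ 2 / 2 by ring]
  unfold φ; ring

lemma integral_φ : ∫ x, φ x = 1 := by
  have h : ∫ x, Real.exp (-(1/2) * x ^ 2) = Real.sqrt (π / (1/2)) :=
    integral_gaussian (1/2)
  have heq : φ = fun x => (Real.sqrt (2 * π))⁻¹ * Real.exp (-(1/2) * x ^ 2) := by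
    funext x; unfold φ; congr 1; ring
  rw [heq, integral_const_mul, h, show π / (1/2 : ℝ) = 2 * π by ring]
  exact inv_mul_cancel₀ (ne_of_gt sqrt2pi_pos)

/-- Master integrability lemma for the shifted Gaussian times a shifted quadratic. -/
lemma integrable_φ_shift_quad (t c : ℝ) :
    Integrable (fun y : ℝ => φ (y - t) * ((y - t) ^ 2 + c)) := by
  have h : Integrable (fun u : ℝ => φ u * (u ^ 2 + c)) := by
    have h2 := integrable_φ.const_mul c
    refine (integrable_φ_sq.add h2).congr (Filter.Eventually.of_forall fun u => ?_)
    simp only [Pi.add_apply]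
    ring
  exact h.comp_sub_right t

/-- There is no probability measure `F` supported on a bounded interval `[−A,A]`
whose Gaussian-smoothed log output density `∫ φ(y−t) log f(y;F) dy` is constant in `t`. -/
theorem no_constant_smoothed_logdensity (A : ℝ) (hA : 0 < A)
    (F : Measure ℝ) [IsProbabilityMeasure F] (hF : F (Icc (-A) A) = 1) :
    ¬ ∃ K : ℝ, ∀ t : ℝ,
        ∫ y : ℝ, φ (y - t) * Real.log (∫ s, φ (y - s) ∂F) = K := by
  rintro ⟨K, hK⟩
  set C : ℝ := Real.log ((Real.sqrt (2 * π))⁻¹) with hC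
  set f : ℝ → ℝ := fun y => ∫ s, φ (y - s) ∂F with hf_def
  have hK' : ∀ t : ℝ, ∫ y : ℝ, φ (y - t) * Real.log (f y) = K := hK
  -- a.e. support
  have hFae : ∀ᵐ s ∂F, s ∈ Icc (-A) A := by
    have hc : F (Icc (-A) A)ᶜ = 0 := by
      rw [measure_compl measurableSet_Icc (measure_ne_top F _), hF, measure_univ]
      simp
    exact ae_iff.2 hc
  -- integrability over F
  have hintF : ∀ y : ℝ, Integrable (fun s => φ (y - s)) F := by
    intro y
    refine (integrable_const ((Real.sqrt (2 * π))⁻¹)).mono'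
      ((continuous_φ.comp (continuous_const.sub continuous_id)).aestronglyMeasurable)
      (Filter.Eventually.of_forall fun s => ?_)
    rw [Real.norm_eq_abs, abs_of_pos (φ_pos _)]
    exact φ_le _
  -- lower bound on f
  have f_lower : ∀ y : ℝ, φ (|y| + A) ≤ f y := by
    intro y
    have hae : ∀ᵐ s ∂F, φ (|y| + A) ≤ φ (y - s) := by
      filter_upwards [hFae] with s hs
      refine φ_le_φ ?_
      have h1 : |s| ≤ A := abs_le.2 ⟨hs.1, hs.2⟩
      have h2 : |y - s| ≤ |y| + A := (abs_sub y s).trans (by linarith)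
      rw [abs_of_nonneg (by positivity : (0:ℝ) ≤ |y| + A)]
      exact h2
    have := integral_mono_ae (integrable_const _) (hintF y) hae
    simpa using this
  have f_pos : ∀ y : ℝ, 0 < f y := fun y => lt_of_lt_of_le (φ_pos _) (f_lower y)
  -- upper bounds on f
  have f_upper : ∀ y : ℝ, f y ≤ (Real.sqrt (2 * π))⁻¹ := by
    intro y
    have := integral_mono (hintF y) (integrable_const _) (fun s => φ_le (y - s))
    simpa using this
  have f_tail : ∀ y : ℝ, A ≤ y → f y ≤ φ (y - A) := by
    intro y hy
    have hae : ∀ᵐ s ∂F, φ (y - s) ≤ φ (y - A) := by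
      filter_upwards [hFae] with s hs
      refine φ_le_φ ?_
      rw [abs_of_nonneg (by linarith [hs.2] : (0:ℝ) ≤ y - s),
        abs_of_nonneg (by linarith : (0:ℝ) ≤ y - A)]
      linarith [hs.2]
    have := integral_mono_ae (hintF y) (integrable_const _) hae
    simpa using this
  -- continuity of f
  have f_cont : Continuous f := by
    refine continuous_of_dominated
      (fun y => ((continuous_φ.comp (continuous_const.sub continuous_id)).aestronglyMeasurable))
      (fun y => Filter.Eventually.of_forall fun s => ?_)
      (integrable_const ((Real.sqrt (2 * π))⁻¹))
      (Filter.Eventually.of_forall fun s => ?_)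
    · rw [Real.norm_eq_abs, abs_of_pos (φ_pos _)]; exact φ_le _
    · exact continuous_φ.comp (continuous_id.sub continuous_const)
  have logf_cont : Continuous fun y => Real.log (f y) :=
    continuous_iff_continuousAt.2 fun y =>
      (Real.continuousAt_log (ne_of_gt (f_pos y))).comp f_cont.continuousAt
  -- bounds on log f
  have hC_nonpos : C ≤ 0 := by
    refine Real.log_nonpos (by positivity) ?_
    rw [inv_le_one_iff₀]
    right
    rw [show (1:ℝ) = Real.sqrt 1 by simp]
    exact Real.sqrt_le_sqrt (by nlinarith [Real.pi_gt_three])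
  have hlog_upper : ∀ y : ℝ, Real.log (f y) ≤ C :=
    fun y => Real.log_le_log (f_pos y) (f_upper y)
  have hlog_lower : ∀ y : ℝ, C - (|y| + A) ^ 2 / 2 ≤ Real.log (f y) := by
    intro y
    have := Real.log_le_log (φ_pos (|y| + A)) (f_lower y)
    rwa [log_φ] at this
  have hlog_tail : ∀ y : ℝ, A ≤ y → Real.log (f y) ≤ C - (y - A) ^ 2 / 2 := by
    intro y hy
    have := Real.log_le_log (f_pos y) (f_tail y hy)
    rwa [log_φ] at this
  -- integrability of the main integrand
  have integrand_int : ∀ t : ℝ,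
      Integrable (fun y => φ (y - t) * Real.log (f y)) := by
    intro t
    refine (integrable_φ_shift_quad t ((|t| + A) ^ 2 - C)).mono'
      ((continuous_φ.comp (continuous_id.sub continuous_const)).mul
        logf_cont).aestronglyMeasurable
      (Filter.Eventually.of_forall fun y => ?_)
    rw [Real.norm_eq_abs, abs_mul, abs_of_pos (φ_pos _)]
    have habs : |Real.log (f y)| ≤ (|y| + A) ^ 2 / 2 - C := by
      rw [abs_le]
      constructor
      · have := hlog_lower y; linarith
      · have := hlog_upper y
        have h2 : (0:ℝ) ≤ (|y| + A) ^ 2 / 2 := by positivity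
        linarith
    have hq : (|y| + A) ^ 2 / 2 - C ≤ (y - t) ^ 2 + ((|t| + A) ^ 2 - C) := by
      have h1 : |y| ≤ |y - t| + |t| := by
        calc |y| = |(y - t) + t| := by ring_nf
        _ ≤ |y - t| + |t| := abs_add_le _ _
      have h2 : |y - t| ^ 2 = (y - t) ^ 2 := sq_abs _
      have h3 : (|y| + A) ^ 2 ≤ (|y - t| + (|t| + A)) ^ 2 := by
        refine pow_le_pow_left₀ (by positivity) (by linarith) 2
      nlinarith [sq_nonneg (|y - t| - (|t| + A)), h2, h3]
    calc φ (y - t) * |Real.log (f y)| ≤ φ (y - t) * ((|y| + A) ^ 2 / 2 - C) :=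
          mul_le_mul_of_nonneg_left habs (φ_pos _).le
      _ ≤ φ (y - t) * ((y - t) ^ 2 + ((|t| + A) ^ 2 - C)) :=
          mul_le_mul_of_nonneg_left hq (φ_pos _).le
  -- the key estimate
  have key : ∀ t : ℝ, A ≤ t → K ≤ C - (t - A) ^ 2 / 2 * φ 1 := by
    intro t ht
    rw [← hK' t]
    have hRHS : Integrable (fun y : ℝ => C * φ (y - t) -
        Set.indicator (Icc t (t + 1)) (fun y => (t - A) ^ 2 / 2 * φ (y - t)) y) := by
      refine Integrable.sub ((integrable_φ.comp_sub_right t).const_mul C) ?_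
      exact ((integrable_φ.comp_sub_right t).const_mul ((t - A) ^ 2 / 2)).indicator
        measurableSet_Icc
    have hle : ∀ y : ℝ, φ (y - t) * Real.log (f y) ≤ C * φ (y - t) -
        Set.indicator (Icc t (t + 1)) (fun y => (t - A) ^ 2 / 2 * φ (y - t)) y := by
      intro y
      by_cases hy : y ∈ Icc t (t + 1)
      · rw [Set.indicator_of_mem hy]
        have hyA : A ≤ y := le_trans ht hy.1
        have h1 : Real.log (f y) ≤ C - (y - A) ^ 2 / 2 := hlog_tail y hyA
        have h2 : (t - A) ^ 2 ≤ (y - A) ^ 2 := by nlinarith [hy.1]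
        have h3 : Real.log (f y) ≤ C - (t - A) ^ 2 / 2 := by linarith
        nlinarith [mul_le_mul_of_nonneg_left h3 (φ_pos (y - t)).le]
      · rw [Set.indicator_of_notMem hy]
        have := mul_le_mul_of_nonneg_left (hlog_upper y) (φ_pos (y - t)).le
        nlinarith [this]
    have hmono := integral_mono (integrand_int t) hRHS hle
    refine hmono.trans ?_
    rw [integral_sub ((integrable_φ.comp_sub_right t).const_mul C)
        (((integrable_φ.comp_sub_right t).const_mul ((t - A) ^ 2 / 2)).indicator
          measurableSet_Icc),
      integral_const_mul, integral_sub_right_eq_self φ t, integral_φ,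
      integral_indicator measurableSet_Icc, integral_const_mul]
    have hm : φ 1 ≤ ∫ y in Icc t (t + 1), φ (y - t) := by
      have h := setIntegral_ge_of_const_le (c := φ 1) (s := Icc t (t + 1))
        (f := fun y => φ (y - t)) measurableSet_Icc
        (by rw [Real.volume_Icc]; exact ENNReal.ofReal_ne_top)
        (fun y hy => φ_le_φ (x := (1:ℝ)) (y := y - t) (by
          rw [abs_one, abs_of_nonneg (by linarith [hy.1] : (0:ℝ) ≤ y - t)]
          linarith [hy.2]))
        ((integrable_φ.comp_sub_right t).integrableOn)
      rwa [Real.volume_real_Icc_of_le (by linarith), show t + 1 - t = 1 by ring,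
        one_smul] at h
    have hcoef : (0:ℝ) ≤ (t - A) ^ 2 / 2 := by positivity
    nlinarith [mul_le_mul_of_nonneg_left hm hcoef]
  -- derive the contradiction
  set B : ℝ := max 0 ((C - K) * 2 / φ 1) with hB_def
  have hB0 : 0 ≤ B := le_max_left _ _
  have hB : C - K ≤ φ 1 * B / 2 := by
    rcases le_or_gt (C - K) 0 with h | h
    · have : (0:ℝ) ≤ φ 1 * B / 2 :=
        div_nonneg (mul_nonneg (φ_pos 1).le hB0) (by norm_num)
      linarith
    · have hB' : B = (C - K) * 2 / φ 1 :=
        max_eq_right (div_nonneg (by linarith) (φ_pos 1).le)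
      have hφ : φ 1 ≠ 0 := ne_of_gt (φ_pos 1)
      rw [hB']
      have hcalc : φ 1 * ((C - K) * 2 / φ 1) / 2 = C - K := by
        have hφ' : φ 1 ≠ 0 := hφ
        field_simp
      rw [hcalc]
  have ht : A ≤ A + Real.sqrt B + 1 := by
    have := Real.sqrt_nonneg B
    linarith
  have h1 := key (A + Real.sqrt B + 1) ht
  have hsq : (A + Real.sqrt B + 1 - A) ^ 2 = B + 2 * Real.sqrt B + 1 := by
    have := Real.sq_sqrt hB0
    nlinarith [Real.sqrt_nonneg B]
  rw [hsq] at h1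
  nlinarith [φ_pos 1, Real.sqrt_nonneg B, mul_nonneg (φ_pos 1).le (Real.sqrt_nonneg B)]
end

section
/- The mutual information density i(t₁,t₂;F) = ∫ f(y|t₁,t₂)·log(f(y|t₁,t₂)/f(y;F)) dy is a continuous function of (t₁,t₂) on the rectangle [−a₁,a₁] × [−a₂,a₂], for any fixed probability measure F on the rectangle. -/
open MeasureTheory Real Set

namespace MIaux

lemma sqrt2pi_pos : 0 < Real.sqrt (2 * π) := Real.sqrt_pos.mpr (by positivity)

lemma phi_eq (x : ℝ) : φ x = (Real.sqrt (2 * π))⁻¹ * Real.exp (-x ^ 2 / 2) := rfl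

lemma phi_pos (x : ℝ) : 0 < φ x := mul_pos (inv_pos.mpr sqrt2pi_pos) (Real.exp_pos _)

lemma phi_le (x : ℝ) : φ x ≤ (Real.sqrt (2 * π))⁻¹ := by
  have h : Real.exp (-x ^ 2 / 2) ≤ 1 := by
    rw [show (1 : ℝ) = Real.exp 0 by simp]
    exact Real.exp_le_exp.mpr (by nlinarith [sq_nonneg x])
  calc φ x ≤ (Real.sqrt (2 * π))⁻¹ * 1 :=
        mul_le_mul_of_nonneg_left h (inv_pos.mpr sqrt2pi_pos).le
    _ = _ := mul_one _

lemma phi_cont : Continuous φ := by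
  unfold φ
  fun_prop

lemma phi_upper {a t : ℝ} (ht : |t| ≤ a) (y : ℝ) :
    φ (y - t) ≤ (Real.sqrt (2 * π))⁻¹ * Real.exp (a * |y| - y ^ 2 / 2) := by
  rw [phi_eq]
  refine mul_le_mul_of_nonneg_left (Real.exp_le_exp.mpr ?_) (inv_pos.mpr sqrt2pi_pos).le
  have h1 : t * y ≤ |t| * |y| := le_trans (le_abs_self _) (le_of_eq (abs_mul t y))
  have h2 : |t| * |y| ≤ a * |y| := mul_le_mul_of_nonneg_right ht (abs_nonneg y)
  nlinarith [sq_nonneg t]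

lemma phi_lower {a t : ℝ} (ht : |t| ≤ a) (y : ℝ) :
    (Real.sqrt (2 * π))⁻¹ * Real.exp (-(a ^ 2 / 2) - a * |y| - y ^ 2 / 2) ≤ φ (y - t) := by
  rw [phi_eq]
  refine mul_le_mul_of_nonneg_left (Real.exp_le_exp.mpr ?_) (inv_pos.mpr sqrt2pi_pos).le
  have h1 : -(t * y) ≤ |t| * |y| := by
    calc -(t * y) ≤ |t * y| := neg_le_abs _
      _ = |t| * |y| := abs_mul _ _
  have h2 : |t| * |y| ≤ a * |y| := mul_le_mul_of_nonneg_right ht (abs_nonneg y)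
  have h3 : t ^ 2 ≤ a ^ 2 := by nlinarith [sq_abs t, abs_nonneg t]
  nlinarith [sq_abs y]

lemma combo_le {p₁ p₂ A B l u : ℝ} (hp₁ : 0 ≤ p₁) (hp₂ : 0 ≤ p₂) (hp : p₁ + p₂ = 1)
    (hAl : l ≤ A) (hAu : A ≤ u) (hBl : l ≤ B) (hBu : B ≤ u) :
    l ≤ p₁ * A + p₂ * B ∧ p₁ * A + p₂ * B ≤ u := by
  have hl : p₁ * l + p₂ * l = l := by rw [← add_mul, hp, one_mul]
  have hu : p₁ * u + p₂ * u = u := by rw [← add_mul, hp, one_mul]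
  constructor
  · nlinarith [mul_le_mul_of_nonneg_left hAl hp₁, mul_le_mul_of_nonneg_left hBl hp₂]
  · nlinarith [mul_le_mul_of_nonneg_left hAu hp₁, mul_le_mul_of_nonneg_left hBu hp₂]

lemma combo_pos {p₁ p₂ A B : ℝ} (hp₁ : 0 ≤ p₁) (hp₂ : 0 ≤ p₂) (hp : p₁ + p₂ = 1)
    (hA : 0 < A) (hB : 0 < B) : 0 < p₁ * A + p₂ * B := by
  rcases lt_or_eq_of_le hp₁ with h | h
  · exact add_pos_of_pos_of_nonneg (mul_pos h hA) (mul_nonneg hp₂ hB.le)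
  · have h2 : p₂ = 1 := by linarith
    rw [← h, h2]
    simpa using hB

lemma abs_log_le {l u x : ℝ} (hl : 0 < l) (h1 : l ≤ x) (h2 : x ≤ u) :
    |Real.log x| ≤ |Real.log l| + |Real.log u| := by
  have hx : 0 < x := hl.trans_le h1
  have h3 : Real.log l ≤ Real.log x := Real.log_le_log hl h1
  have h4 : Real.log x ≤ Real.log u := Real.log_le_log hx h2
  rw [abs_le]
  constructor
  · linarith [neg_abs_le (Real.log l), abs_nonneg (Real.log u)]
  · linarith [le_abs_self (Real.log u), abs_nonneg (Real.log l)]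

end MIaux

/-- The mutual information density `i(t₁,t₂;F)` is continuous in `(t₁,t₂)` on the
rectangle `[-a₁,a₁] × [-a₂,a₂]`, for any fixed probability measure `F` on the
rectangle. -/
theorem mutual_information_density_continuous (a₁ a₂ : ℝ) (ha₁ : 0 < a₁) (ha₂ : 0 < a₂)
    (p₁ p₂ : ℝ) (hp₁ : 0 ≤ p₁) (hp₂ : 0 ≤ p₂) (hp : p₁ + p₂ = 1)
    (F : Measure (ℝ × ℝ)) [IsProbabilityMeasure F]
    (hF : F (Icc (-a₁) a₁ ×ˢ Icc (-a₂) a₂) = 1) :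
    ContinuousOn
      (fun t : ℝ × ℝ => ∫ y : ℝ, (p₁ * φ (y - t.1) + p₂ * φ (y - t.2)) *
        Real.log ((p₁ * φ (y - t.1) + p₂ * φ (y - t.2)) /
          ∫ s, (p₁ * φ (y - s.1) + p₂ * φ (y - s.2)) ∂F))
      (Icc (-a₁) a₁ ×ˢ Icc (-a₂) a₂) := by
  classical
  set a : ℝ := max a₁ a₂ with ha_def
  have ha : 0 < a := lt_max_iff.mpr (Or.inl ha₁)
  set R : Set (ℝ × ℝ) := Icc (-a₁) a₁ ×ˢ Icc (-a₂) a₂ with hR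
  have hRmeas : MeasurableSet R := measurableSet_Icc.prod measurableSet_Icc
  have hmem : ∀ t : ℝ × ℝ, t ∈ R → |t.1| ≤ a ∧ |t.2| ≤ a := by
    rintro ⟨t₁, t₂⟩ ht
    simp only [hR, Set.mem_prod, Set.mem_Icc] at ht
    have e1 : a₁ ≤ a := le_max_left _ _
    have e2 : a₂ ≤ a := le_max_right _ _
    constructor <;> rw [abs_le] <;>
      exact ⟨by simp only []; linarith [ht.1.1, ht.1.2, ht.2.1, ht.2.2],
        by simp only []; linarith [ht.1.1, ht.1.2, ht.2.1, ht.2.2]⟩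
  set C0 : ℝ := (Real.sqrt (2 * π))⁻¹ with hC0def
  have hC0 : 0 < C0 := inv_pos.mpr MIaux.sqrt2pi_pos
  set L : ℝ → ℝ := fun y => C0 * Real.exp (-(a ^ 2 / 2) - a * |y| - y ^ 2 / 2) with hL
  have hLpos : ∀ y, 0 < L y := fun y => mul_pos hC0 (Real.exp_pos _)
  set f : (ℝ × ℝ) → ℝ → ℝ := fun t y => p₁ * φ (y - t.1) + p₂ * φ (y - t.2) with hfdef
  set d : ℝ → ℝ := fun y => ∫ s, f s y ∂F with hddef
  -- basic facts about f
  have fpos : ∀ t y, 0 < f t y := fun t y =>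
    MIaux.combo_pos hp₁ hp₂ hp (MIaux.phi_pos _) (MIaux.phi_pos _)
  have f_le_C0 : ∀ (t : ℝ × ℝ) (y : ℝ), f t y ≤ C0 := fun t y =>
    (MIaux.combo_le hp₁ hp₂ hp (MIaux.phi_pos _).le (MIaux.phi_le _)
      (MIaux.phi_pos _).le (MIaux.phi_le _)).2
  have fge : ∀ t ∈ R, ∀ y, L y ≤ f t y := by
    intro t ht y
    obtain ⟨h1, h2⟩ := hmem t ht
    exact (MIaux.combo_le hp₁ hp₂ hp (MIaux.phi_lower h1 y) (MIaux.phi_le _)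
      (MIaux.phi_lower h2 y) (MIaux.phi_le _)).1
  have fupper : ∀ t ∈ R, ∀ y, f t y ≤ C0 * Real.exp (a * |y| - y ^ 2 / 2) := by
    intro t ht y
    obtain ⟨h1, h2⟩ := hmem t ht
    exact (MIaux.combo_le hp₁ hp₂ hp (MIaux.phi_pos _).le (MIaux.phi_upper h1 y)
      (MIaux.phi_pos _).le (MIaux.phi_upper h2 y)).2
  have fcont_y : ∀ t : ℝ × ℝ, Continuous fun y => f t y := by
    intro t
    exact (continuous_const.mul (MIaux.phi_cont.comp (continuous_id.sub continuous_const))).add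
      (continuous_const.mul (MIaux.phi_cont.comp (continuous_id.sub continuous_const)))
  have fcont_s : ∀ y : ℝ, Continuous fun s : ℝ × ℝ => f s y := by
    intro y
    exact (continuous_const.mul
        (MIaux.phi_cont.comp (continuous_const.sub continuous_fst))).add
      (continuous_const.mul (MIaux.phi_cont.comp (continuous_const.sub continuous_snd)))
  have fint : ∀ y, Integrable (fun s => f s y) F := by
    intro y
    refine Integrable.mono' (integrable_const C0) (fcont_s y).aestronglyMeasurable ?_
    filter_upwards with s
    rw [Real.norm_eq_abs, abs_of_pos (fpos s y)]
    exact f_le_C0 s y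
  -- facts about d
  have dcont : Continuous d := by
    rw [hddef]
    refine continuous_of_dominated (fun y => (fcont_s y).aestronglyMeasurable) ?_
      (integrable_const C0) ?_
    · intro y
      filter_upwards with s
      rw [Real.norm_eq_abs, abs_of_pos (fpos s y)]
      exact f_le_C0 s y
    · filter_upwards with s
      exact (continuous_const.mul
          (MIaux.phi_cont.comp (continuous_id.sub continuous_const))).add
        (continuous_const.mul (MIaux.phi_cont.comp (continuous_id.sub continuous_const)))
  have dle : ∀ y, d y ≤ C0 := by
    intro y
    have : d y ≤ ∫ _s, C0 ∂F := integral_mono (fint y) (integrable_const _) fun s => f_le_C0 s y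
    simpa using this
  have dge : ∀ y, L y ≤ d y := by
    intro y
    have h1 : ∀ s, R.indicator (fun _ => L y) s ≤ f s y := by
      intro s
      by_cases hs : s ∈ R
      · rw [indicator_of_mem hs]; exact fge s hs y
      · rw [indicator_of_notMem hs]; exact (fpos s y).le
    have h2 : Integrable (R.indicator fun _ => L y) F :=
      (integrable_const (L y)).indicator hRmeas
    have h3 : (∫ s, R.indicator (fun _ => L y) s ∂F) = L y := by
      rw [integral_indicator_const _ hRmeas, measureReal_def, hF]
      simp
    calc L y = ∫ s, R.indicator (fun _ => L y) s ∂F := h3.symm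
      _ ≤ d y := integral_mono h2 (fint y) h1
  have dpos : ∀ y, 0 < d y := fun y => (hLpos y).trans_le (dge y)
  -- log bounds
  have logL : ∀ y, |Real.log (L y)| ≤ |Real.log C0| + (a ^ 2 / 2 + a * |y| + y ^ 2 / 2) := by
    intro y
    have h0 : Real.log (L y) = Real.log C0 + (-(a ^ 2 / 2) - a * |y| - y ^ 2 / 2) := by
      simp only [hL]
      rw [Real.log_mul hC0.ne' (Real.exp_ne_zero _), Real.log_exp]
    have hnp : (-(a ^ 2 / 2) - a * |y| - y ^ 2 / 2) ≤ 0 := by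
      nlinarith [sq_nonneg a, sq_nonneg y, mul_nonneg ha.le (abs_nonneg y)]
    have h1 : |(-(a ^ 2 / 2) - a * |y| - y ^ 2 / 2)| = a ^ 2 / 2 + a * |y| + y ^ 2 / 2 := by
      rw [abs_of_nonpos hnp]; ring
    rw [h0]
    calc |Real.log C0 + (-(a ^ 2 / 2) - a * |y| - y ^ 2 / 2)|
        ≤ |Real.log C0| + |(-(a ^ 2 / 2) - a * |y| - y ^ 2 / 2)| := abs_add_le _ _
      _ = _ := by rw [h1]
  have logbnd : ∀ x y : ℝ, L y ≤ x → x ≤ C0 →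
      |Real.log x| ≤ 2 * |Real.log C0| + a ^ 2 / 2 + a * |y| + y ^ 2 / 2 := by
    intro x y hlx hxu
    have := MIaux.abs_log_le (hLpos y) hlx hxu
    linarith [logL y]
  -- continuity of the integrand
  have gcont_y : ∀ t : ℝ × ℝ, Continuous fun y => f t y * Real.log (f t y / d y) := by
    intro t
    refine (fcont_y t).mul (Continuous.log ((fcont_y t).div dcont fun y => (dpos y).ne') ?_)
    intro y
    exact (div_pos (fpos t y) (dpos y)).ne'
  have gcont_t : ∀ y : ℝ, Continuous fun t : ℝ × ℝ => f t y * Real.log (f t y / d y) := by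
    intro y
    refine (fcont_s y).mul (Continuous.log ((fcont_s y).div_const (d y)) ?_)
    intro t
    exact (div_pos (fpos t y) (dpos y)).ne'
  -- the dominating function
  set S : ℝ → ℝ := fun y => 4 * |Real.log C0| + a ^ 2 + 2 * a * |y| + y ^ 2 with hS
  have hSnn : ∀ y, 0 ≤ S y := by
    intro y
    simp only [hS]
    nlinarith [abs_nonneg (Real.log C0), sq_nonneg a, sq_nonneg y,
      mul_nonneg ha.le (abs_nonneg y)]
  set bound : ℝ → ℝ := fun y => C0 * Real.exp (a * |y| - y ^ 2 / 2) * S y with hbound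
  have hbound_nn : ∀ y, 0 ≤ bound y := fun y =>
    mul_nonneg (mul_nonneg hC0.le (Real.exp_pos _).le) (hSnn y)
  have bound_int : Integrable bound := by
    have h0 : Integrable fun y : ℝ => Real.exp (-(4 : ℝ)⁻¹ * y ^ 2) :=
      integrable_exp_neg_mul_sq (by norm_num)
    have h1 : Integrable fun y : ℝ => |y| * Real.exp (-(4 : ℝ)⁻¹ * y ^ 2) := by
      have h := (integrable_mul_exp_neg_mul_sq (b := (4 : ℝ)⁻¹) (by norm_num)).abs
      refine h.congr (Filter.Eventually.of_forall fun y => ?_)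
      show |y * Real.exp (-(4 : ℝ)⁻¹ * y ^ 2)| = |y| * Real.exp (-(4 : ℝ)⁻¹ * y ^ 2)
      rw [abs_mul, abs_of_pos (Real.exp_pos _)]
    have h2 : Integrable fun y : ℝ => y ^ 2 * Real.exp (-(4 : ℝ)⁻¹ * y ^ 2) := by
      have h := integrable_rpow_mul_exp_neg_mul_sq (b := (4 : ℝ)⁻¹) (by norm_num)
        (s := 2) (by norm_num)
      refine h.congr (Filter.Eventually.of_forall fun y => ?_)
      show y ^ (2 : ℝ) * Real.exp (-(4 : ℝ)⁻¹ * y ^ 2) = y ^ 2 * Real.exp (-(4 : ℝ)⁻¹ * y ^ 2)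
      rw [show (2 : ℝ) = ((2 : ℕ) : ℝ) by norm_num, Real.rpow_natCast]
    have hint : Integrable (fun y : ℝ =>
        C0 * Real.exp (a ^ 2) * (4 * |Real.log C0| + a ^ 2) * Real.exp (-(4 : ℝ)⁻¹ * y ^ 2)
        + C0 * Real.exp (a ^ 2) * (2 * a) * (|y| * Real.exp (-(4 : ℝ)⁻¹ * y ^ 2))
        + C0 * Real.exp (a ^ 2) * (y ^ 2 * Real.exp (-(4 : ℝ)⁻¹ * y ^ 2))) :=
      ((h0.const_mul _).add (h1.const_mul _)).add (h2.const_mul _)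
    refine hint.mono' ?_ ?_
    · apply Continuous.aestronglyMeasurable
      refine (continuous_const.mul ?_).mul ?_
      · exact Real.continuous_exp.comp
          ((continuous_const.mul continuous_abs).sub (by fun_prop))
      · simp only [hS]
        have : Continuous fun y : ℝ => 2 * a * |y| := continuous_const.mul continuous_abs
        fun_prop
    · filter_upwards with y
      rw [Real.norm_eq_abs, abs_of_nonneg (hbound_nn y)]
      have hexp : Real.exp (a * |y| - y ^ 2 / 2)
          ≤ Real.exp (a ^ 2) * Real.exp (-(4 : ℝ)⁻¹ * y ^ 2) := by
        rw [← Real.exp_add]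
        apply Real.exp_le_exp.mpr
        nlinarith [sq_nonneg (a - |y| / 2), sq_abs y]
      calc bound y = C0 * Real.exp (a * |y| - y ^ 2 / 2) * S y := rfl
        _ ≤ C0 * (Real.exp (a ^ 2) * Real.exp (-(4 : ℝ)⁻¹ * y ^ 2)) * S y :=
            mul_le_mul_of_nonneg_right (mul_le_mul_of_nonneg_left hexp hC0.le) (hSnn y)
        _ = _ := by simp only [hS]; ring
  -- main application of dominated convergence
  have key : ContinuousOn (fun t : ℝ × ℝ => ∫ y : ℝ, f t y * Real.log (f t y / d y)) R := by
    intro t₀ ht₀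
    refine continuousWithinAt_of_dominated
      (Filter.Eventually.of_forall fun t => (gcont_y t).aestronglyMeasurable) ?_ bound_int
      (Filter.Eventually.of_forall fun y => (gcont_t y).continuousWithinAt)
    filter_upwards [self_mem_nhdsWithin] with t ht
    refine Filter.Eventually.of_forall fun y => ?_
    rw [Real.norm_eq_abs, abs_mul, abs_of_pos (fpos t y)]
    have hlog : |Real.log (f t y / d y)| ≤ S y := by
      rw [Real.log_div (fpos t y).ne' (dpos y).ne']
      have h1 := logbnd (f t y) y (fge t ht y) (f_le_C0 t y)
      have h2 := logbnd (d y) y (dge y) (dle y)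
      have h3 := abs_sub (Real.log (f t y)) (Real.log (d y))
      simp only [hS]
      linarith
    calc f t y * |Real.log (f t y / d y)|
        ≤ C0 * Real.exp (a * |y| - y ^ 2 / 2) * S y :=
          mul_le_mul (fupper t ht y) hlog (abs_nonneg _)
            (mul_nonneg hC0.le (Real.exp_pos _).le)
      _ = bound y := rfl
  exact key
end
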